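/- arXiv:1810.02670 — 2 statements merged into one kernel-verified Lean document; each statement's English description precedes it below -/
import Mathlib

section
/- Let n ≥ 3 be a natural number, let P be a finite set of prime numbers with |P| ≥ log₂(n!), and let z₁, …, z_k be vectors in {0,1}ⁿ (viewed as integer vectors). Then z₁, …, z_k are linearly independent over ℝ if and only if there exists a prime p ∈ P such that the reductions of z₁, …, z_k modulo p are linearly independent over the field ℤ/pℤ. -/
open Matrix in
lemma lemA {F : Type*} [Field F] {k n : ℕ} (M : Matrix (Fin k) (Fin n) F) :
    LinearIndependent F (fun i => M i) ↔
      ∃ g : Fin k → Fin n, Function.Injective g ∧ (M.submatrix id g).det ≠ 0 := by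
  constructor
  · intro h
    have hrank : M.rank = k := by simpa using h.rank_matrix
    have hspan : Submodule.span F (Set.range Mᵀ) = ⊤ := by
      apply Submodule.eq_top_of_finrank_eq
      rw [← show M.col = Mᵀ from rfl, ← Matrix.rank_eq_finrank_span_cols, hrank, Module.finrank_fintype_fun_eq_card,
        Fintype.card_fin]
    obtain ⟨b, hbsub, hbspan, hbli⟩ := exists_linearIndependent F (Set.range Mᵀ)
    rw [hspan] at hbspan
    have hbfin : b.Finite := hbli.setFinite
    haveI : Fintype b := hbfin.fintype
    have hcard : Fintype.card b = k := by
      have := Module.finrank_eq_card_basis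
        (Module.Basis.mk hbli (by rw [Subtype.range_coe, hbspan]))
      simpa [Module.finrank_fintype_fun_eq_card] using this.symm
    let e : Fin k ≃ b := (Fintype.equivFinOfCardEq hcard).symm
    have hex : ∀ x : b, ∃ j : Fin n, Mᵀ j = x.1 := fun x => hbsub x.2
    choose ψ hψ using hex
    refine ⟨fun i => ψ (e i), ?_, ?_⟩
    · intro a a' haa'
      apply e.injective
      apply Subtype.val_injective
      show (e a).1 = (e a').1
      rw [← hψ (e a), ← hψ (e a')]
      exact congrArg _ haa'
    · have hcols : LinearIndependent F (fun j => (M.submatrix id (fun i => ψ (e i)))ᵀ j) := by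
        have : (fun j => (M.submatrix id (fun i => ψ (e i)))ᵀ j) = (fun j : Fin k => (e j).1) := by
          funext j
          rw [← hψ (e j)]
          ext i
          simp [Matrix.submatrix_apply, Matrix.transpose_apply]
        rw [this]
        exact hbli.comp e e.injective
      have := Matrix.linearIndependent_cols_iff_isUnit.mp hcols
      rw [Matrix.isUnit_iff_isUnit_det, isUnit_iff_ne_zero] at this
      exact this
  · rintro ⟨g, hg, hdet⟩
    have hrows : LinearIndependent F (fun i => (M.submatrix id g) i) :=
      Matrix.linearIndependent_rows_iff_isUnit.2
        ((Matrix.isUnit_iff_isUnit_det _).2 (isUnit_iff_ne_zero.2 hdet))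
    apply LinearIndependent.of_comp (LinearMap.funLeft F F g)
    have : (LinearMap.funLeft F F g) ∘ (fun i => M i) = fun i => (M.submatrix id g) i := by
      funext i; ext j; simp [Matrix.submatrix_apply]
    rw [this]
    exact hrows


lemma detBound {k : ℕ} (A : Matrix (Fin k) (Fin k) ℤ)
    (h01 : ∀ i j, A i j = 0 ∨ A i j = 1) : |A.det| ≤ (Nat.factorial k : ℤ) := by
  rw [Matrix.det_apply]
  calc |∑ σ : Equiv.Perm (Fin k), Equiv.Perm.sign σ • ∏ i, A (σ i) i|
      ≤ ∑ σ : Equiv.Perm (Fin k), |Equiv.Perm.sign σ • ∏ i, A (σ i) i| :=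
        Finset.abs_sum_le_sum_abs _ _
    _ ≤ ∑ _σ : Equiv.Perm (Fin k), 1 := by
        apply Finset.sum_le_sum
        intro σ _
        have habs : |Equiv.Perm.sign σ • ∏ i, A (σ i) i| = |∏ i, A (σ i) i| := by
          rcases Int.units_eq_one_or (Equiv.Perm.sign σ) with h | h <;>
            simp [h, Units.smul_def]
        rw [habs, Finset.abs_prod]
        calc ∏ i, |A (σ i) i| ≤ ∏ _i : Fin k, 1 := by
              apply Finset.prod_le_prod
              · intro i _; exact abs_nonneg _
              · intro i _; rcases h01 (σ i) i with h | h <;> simp [h]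
          _ = 1 := by simp
    _ = (Nat.factorial k : ℤ) := by
        simp [Finset.card_univ, Fintype.card_perm]


/-- Let `n ≥ 3`, let `P` be a finite set of primes with `|P| ≥ log₂(n!)`, and
let `z₁, …, z_k ∈ {0,1}ⁿ` be integer vectors. Then `z₁, …, z_k` are linearly independent
over `ℝ` iff there is `p ∈ P` such that their reductions mod `p` are linearly independent
over `ℤ/pℤ`. -/
theorem stmt_0 (n k : ℕ) (hn : 3 ≤ n) (P : Finset ℕ)
    (hP : ∀ p ∈ P, Nat.Prime p) (hcard : Real.logb 2 (Nat.factorial n) ≤ (P.card : ℝ))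
    (z : Fin k → Fin n → ℤ) (h01 : ∀ i j, z i j = 0 ∨ z i j = 1) :
    LinearIndependent ℝ (fun i : Fin k => fun j : Fin n => ((z i j : ℝ))) ↔
      ∃ p ∈ P, LinearIndependent (ZMod p)
        (fun i : Fin k => fun j : Fin n => ((z i j : ZMod p))) := by
  have hPpow : n.factorial ≤ 2 ^ P.card := by
    have hfpos : (0 : ℝ) < (Nat.factorial n : ℝ) := by
      exact_mod_cast n.factorial_pos
    have h2 : (n.factorial : ℝ) ≤ (2 : ℝ) ^ ((P.card : ℕ) : ℝ) :=
      (Real.logb_le_iff_le_rpow (by norm_num) hfpos).mp hcard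
    rw [Real.rpow_natCast] at h2
    exact_mod_cast h2
  constructor
  · intro h
    obtain ⟨g, hg, hdet⟩ := (lemA (Matrix.of fun i j => ((z i j : ℝ)))).mp h
    set A : Matrix (Fin k) (Fin k) ℤ := (Matrix.of z).submatrix id g with hA
    have hcast : ((Matrix.of fun i j => ((z i j : ℝ))).submatrix id g) =
        (Int.castRingHom ℝ).mapMatrix A := by
      ext i j; simp [hA]
    have hAdet : A.det ≠ 0 := by
      intro h0
      rw [hcast, ← RingHom.map_det, h0] at hdet
      simp at hdet
    have hk : k ≤ n := by
      have := Fintype.card_le_of_injective g hg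
      simpa using this
    have hbound : A.det.natAbs ≤ n.factorial := by
      have hb := detBound A (fun i j => h01 i (g j))
      rw [Int.abs_eq_natAbs] at hb
      have hb' : A.det.natAbs ≤ Nat.factorial k := by exact_mod_cast hb
      exact hb'.trans (Nat.factorial_le hk)
    have hex : ∃ p ∈ P, ¬ ((p : ℤ) ∣ A.det) := by
      by_contra hall
      push_neg at hall
      have hdvd : ∀ p ∈ P, p ∣ A.det.natAbs := fun p hp =>
        Int.natCast_dvd.mp (hall p hp)
      have hprod : (∏ p ∈ P, p) ∣ A.det.natAbs :=
        Finset.prod_primes_dvd _ (fun p hp => (hP p hp).prime) hdvd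
      have h2le : 2 ^ P.card ≤ ∏ p ∈ P, p := by
        calc 2 ^ P.card = ∏ _p ∈ P, 2 := by rw [Finset.prod_const]
          _ ≤ ∏ p ∈ P, p := Finset.prod_le_prod' (fun p hp => (hP p hp).two_le)
      have hne : A.det.natAbs ≠ 0 := fun h0 => hAdet (Int.natAbs_eq_zero.mp h0)
      have hle : (∏ p ∈ P, p) ≤ A.det.natAbs :=
        Nat.le_of_dvd (Nat.pos_of_ne_zero hne) hprod
      have heq : 2 ^ P.card = n.factorial :=
        le_antisymm (h2le.trans (hle.trans hbound)) hPpow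
      have h3 : 3 ∣ n.factorial := Nat.dvd_factorial (by norm_num) hn
      rw [← heq] at h3
      have h32 : (3 : ℕ) ∣ 2 := Nat.Prime.dvd_of_dvd_pow (by norm_num) h3
      norm_num at h32
    obtain ⟨p, hpP, hpd⟩ := hex
    haveI : Fact (Nat.Prime p) := ⟨hP p hpP⟩
    refine ⟨p, hpP, ?_⟩
    apply (lemA (Matrix.of fun i j => ((z i j : ZMod p)))).mpr
    refine ⟨g, hg, ?_⟩
    have hcastp : ((Matrix.of fun i j => ((z i j : ZMod p))).submatrix id g) =
        (Int.castRingHom (ZMod p)).mapMatrix A := by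
      ext i j; simp [hA]
    rw [hcastp, ← RingHom.map_det]
    simpa [ZMod.intCast_zmod_eq_zero_iff_dvd] using hpd
  · rintro ⟨p, hpP, h⟩
    haveI : Fact (Nat.Prime p) := ⟨hP p hpP⟩
    obtain ⟨g, hg, hdet⟩ := (lemA (Matrix.of fun i j => ((z i j : ZMod p)))).mp h
    set A : Matrix (Fin k) (Fin k) ℤ := (Matrix.of z).submatrix id g with hA
    have hcastp : ((Matrix.of fun i j => ((z i j : ZMod p))).submatrix id g) =
        (Int.castRingHom (ZMod p)).mapMatrix A := by
      ext i j; simp [hA]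
    have hAdet : A.det ≠ 0 := by
      intro h0
      rw [hcastp, ← RingHom.map_det, h0] at hdet
      simp at hdet
    apply (lemA (Matrix.of fun i j => ((z i j : ℝ)))).mpr
    refine ⟨g, hg, ?_⟩
    have hcast : ((Matrix.of fun i j => ((z i j : ℝ))).submatrix id g) =
        (Int.castRingHom ℝ).mapMatrix A := by
      ext i j; simp [hA]
    rw [hcast, ← RingHom.map_det]
    simpa using hAdet
end

section
/- Let C ⊆ ℝⁿ be a nonempty compact convex set, let I be a nonempty finite index set, and for each i ∈ I let aᵢ ∈ ℝⁿ and bᵢ ∈ ℝ. Define ε* = max_{x ∈ C} min_{i ∈ I} (⟨aᵢ, x⟩ − bᵢ) (the maximum is attained since C is compact and the objective is continuous). Then there exists an index i ∈ I such that every maximizer x ∈ C (i.e., every x ∈ C with min_{j ∈ I} (⟨aⱼ, x⟩ − bⱼ) = ε*) satisfies ⟨aᵢ, x⟩ − bᵢ = ε*. -/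
/-- Let `C ⊆ ℝⁿ` be a nonempty compact convex set, `I` a nonempty finite
index set, and for `i ∈ I` let `aᵢ ∈ ℝⁿ`, `bᵢ ∈ ℝ`. If `ε` is the maximum over `x ∈ C`
of `min_{i ∈ I} (⟨aᵢ, x⟩ − bᵢ)` (attained on `C`), then there is an index `i ∈ I` such
that every maximizer `x ∈ C` satisfies `⟨aᵢ, x⟩ − bᵢ = ε`. -/
theorem stmt_8 {n : ℕ} {I : Type*} [Fintype I] [Nonempty I]
    (C : Set (Fin n → ℝ)) (hCne : C.Nonempty) (hCcomp : IsCompact C) (hCconv : Convex ℝ C)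
    (a : I → Fin n → ℝ) (b : I → ℝ) (ε : ℝ)
    (hub : ∀ x ∈ C,
      (Finset.univ.inf' Finset.univ_nonempty fun i => (∑ j, a i j * x j) - b i) ≤ ε)
    (hatt : ∃ x ∈ C,
      (Finset.univ.inf' Finset.univ_nonempty fun i => (∑ j, a i j * x j) - b i) = ε) :
    ∃ i : I, ∀ x ∈ C,
      (Finset.univ.inf' Finset.univ_nonempty fun i => (∑ j, a i j * x j) - b i) = ε →
        (∑ j, a i j * x j) - b i = ε := by
  by_contra hcon
  push_neg at hcon
  choose x hxC hxmin hxne using hcon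
  -- each x i is a maximizer where constraint i is strictly slack
  have hge : ∀ i k : I, ε ≤ (∑ j, a i j * x k j) - b i := by
    intro i k
    rw [← hxmin k]
    exact Finset.inf'_le _ (Finset.mem_univ i)
  have hgt : ∀ i : I, ε < (∑ j, a i j * x i j) - b i := by
    intro i
    exact lt_of_le_of_ne (hge i i) (Ne.symm (hxne i))
  set m : ℝ := (Fintype.card I : ℝ) with hm
  have hmpos : 0 < m := by
    simp [hm]
    exact Fintype.card_pos
  set w : ℝ := m⁻¹ with hw
  have hwpos : 0 < w := inv_pos.mpr hmpos
  have hwsum : ∑ _k : I, w = 1 := by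
    rw [Finset.sum_const, Finset.card_univ, nsmul_eq_mul]
    rw [← hm, hw]
    exact mul_inv_cancel₀ (ne_of_gt hmpos)
  set y : Fin n → ℝ := ∑ k : I, w • x k with hy
  have hyC : y ∈ C := by
    refine hCconv.sum_mem (fun k _ => le_of_lt hwpos) hwsum (fun k _ => hxC k)
  -- value of each affine function at y
  have hval : ∀ i : I, (∑ j, a i j * y j) - b i
      = ∑ k : I, w * ((∑ j, a i j * x k j) - b i) := by
    intro i
    have : (∑ j, a i j * y j) = ∑ k : I, w * (∑ j, a i j * x k j) := by
      simp only [hy, Finset.sum_apply, Pi.smul_apply, smul_eq_mul,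
        Finset.mul_sum]
      rw [Finset.sum_comm]
      congr 1; ext j; congr 1; ext k; ring
    rw [this]
    have hb : (b i : ℝ) = ∑ k : I, w * b i := by
      rw [← Finset.sum_mul, hwsum, one_mul]
    calc (∑ k : I, w * (∑ j, a i j * x k j)) - b i
        = (∑ k : I, w * (∑ j, a i j * x k j)) - ∑ k : I, w * b i := by rw [← hb]
      _ = ∑ k : I, w * ((∑ j, a i j * x k j) - b i) := by
          rw [← Finset.sum_sub_distrib]; congr 1; ext k; ring
  have hygt : ∀ i : I, ε < (∑ j, a i j * y j) - b i := by
    intro i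
    rw [hval i]
    have hε : ε = ∑ k : I, w * ε := by rw [← Finset.sum_mul, hwsum, one_mul]
    rw [hε]
    refine Finset.sum_lt_sum (fun k _ => ?_) ⟨i, Finset.mem_univ i, ?_⟩
    · exact mul_le_mul_of_nonneg_left (hge i k) (le_of_lt hwpos)
    · exact mul_lt_mul_of_pos_left (hgt i) hwpos
  have : ε < Finset.univ.inf' Finset.univ_nonempty
      fun i => (∑ j, a i j * y j) - b i := by
    rw [Finset.lt_inf'_iff]
    exact fun i _ => hygt i
  exact absurd (hub y hyC) (not_le.mpr this)
end
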